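/- For every t > 0, the function x ↦ e^{−tx}·J₀(x) is integrable on [0,∞) and ∫₀^∞ e^{−tx}·J₀(x) dx = 1/√(1 + t²). (Equation (eq:laplace) of the paper.) -/

import Mathlib

open MeasureTheory Real

noncomputable def J0 (x : ℝ) : ℝ :=
  ∑' k : ℕ, (-1 : ℝ) ^ k * (x / 2) ^ (2 * k) / ((Nat.factorial k : ℝ)) ^ 2

noncomputable def J1 (x : ℝ) : ℝ :=
  ∑' k : ℕ, (-1 : ℝ) ^ k * (x / 2) ^ (2 * k + 1) /
    ((Nat.factorial k : ℝ) * (Nat.factorial (k + 1) : ℝ))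

open Set

lemma prod_ratio (k : ℕ) : ∏ i ∈ Finset.range k, ((2*(i:ℝ)+1)/(2*i+2))
    = (Nat.factorial (2*k) : ℝ) / (4^k * (Nat.factorial k : ℝ)^2) := by
  induction k with
  | zero => simp
  | succ n ih =>
    rw [Finset.prod_range_succ, ih]
    have e1 : Nat.factorial (2*(n+1)) = (2*n+2) * ((2*n+1) * Nat.factorial (2*n)) := by
      have : 2*(n+1) = (2*n+1)+1 := by ring
      rw [this, Nat.factorial_succ, Nat.factorial_succ]
    have e2 : Nat.factorial (n+1) = (n+1) * Nat.factorial n := Nat.factorial_succ n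
    rw [e1, e2]
    push_cast
    have h2 : (Nat.factorial n : ℝ) ≠ 0 := Nat.cast_ne_zero.mpr (Nat.factorial_ne_zero n)
    have h3 : (4:ℝ)^n ≠ 0 := by positivity
    have h4 : (2*(n:ℝ)+2) ≠ 0 := by positivity
    have h5 : ((n:ℝ)+1) ≠ 0 := by positivity
    field_simp
    ring

lemma laplace_cos (t b : ℝ) (ht : 0 < t) :
    IntegrableOn (fun x : ℝ => Real.exp (-t*x) * Real.cos (b*x)) (Ioi 0) ∧
    ∫ x in Ioi (0:ℝ), Real.exp (-t*x) * Real.cos (b*x) = t/(t^2+b^2) := by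
  have hd : (0:ℝ) < t^2 + b^2 := by positivity
  have hexp0 : Filter.Tendsto (fun x : ℝ => Real.exp (-t*x)) Filter.atTop (nhds 0) := by
    have h1 : Filter.Tendsto (fun x : ℝ => -t*x) Filter.atTop Filter.atBot :=
      (Filter.tendsto_const_mul_atBot_of_neg (neg_neg_iff_pos.mpr ht)).mpr Filter.tendsto_id
    exact Real.tendsto_exp_atBot.comp h1
  have hint : IntegrableOn (fun x : ℝ => Real.exp (-t*x) * Real.cos (b*x)) (Ioi 0) := by
    apply Integrable.mono (exp_neg_integrableOn_Ioi 0 ht)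
    · exact ((Real.continuous_exp.comp (continuous_const.mul continuous_id)).mul
        (Real.continuous_cos.comp (continuous_const.mul continuous_id))).aestronglyMeasurable
    · filter_upwards with x
      simp only [Real.norm_eq_abs, abs_mul, Real.abs_exp]
      exact mul_le_of_le_one_right (Real.exp_pos _).le (Real.abs_cos_le_one _)
  refine ⟨hint, ?_⟩
  set F : ℝ → ℝ := fun x => Real.exp (-t*x) * (-t * Real.cos (b*x) + b * Real.sin (b*x)) / (t^2+b^2)
    with hFdef
  have hF : ∀ x ∈ Ici (0:ℝ), HasDerivAt F (Real.exp (-t*x) * Real.cos (b*x)) x := by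
    intro x _
    have he : HasDerivAt (fun x : ℝ => Real.exp (-t*x)) (Real.exp (-t*x) * (-t)) x := by
      have : HasDerivAt (fun x : ℝ => -t*x) (-t) x := by
        simpa using (hasDerivAt_id x).const_mul (-t)
      exact (Real.hasDerivAt_exp _).comp x this
    have hb' : HasDerivAt (fun x : ℝ => b*x) b x := by
      simpa using (hasDerivAt_id x).const_mul b
    have hc : HasDerivAt (fun x : ℝ => Real.cos (b*x)) (-Real.sin (b*x) * b) x :=
      (Real.hasDerivAt_cos _).comp x hb'
    have hs : HasDerivAt (fun x : ℝ => Real.sin (b*x)) (Real.cos (b*x) * b) x :=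
      (Real.hasDerivAt_sin _).comp x hb'
    have h : HasDerivAt (fun x => Real.exp (-t*x) * (-t * Real.cos (b*x) + b * Real.sin (b*x)))
        (Real.exp (-t*x) * (-t) * (-t * Real.cos (b*x) + b * Real.sin (b*x)) +
         Real.exp (-t*x) * (-t * (-Real.sin (b*x) * b) + b * (Real.cos (b*x) * b))) x :=
      he.mul ((hc.const_mul (-t)).add (hs.const_mul b))
    have h2 := h.div_const (t^2+b^2)
    refine h2.congr_deriv ?_
    field_simp
    ring
  have hlim : Filter.Tendsto F Filter.atTop (nhds 0) := by
    have hb1 : ∀ x : ℝ, ‖F x‖ ≤ Real.exp (-t*x) * ((t + |b|)/(t^2+b^2)) := by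
      intro x
      rw [hFdef]
      simp only [Real.norm_eq_abs, abs_div, abs_of_pos hd, abs_mul, Real.abs_exp,
        mul_div_assoc]
      apply mul_le_mul_of_nonneg_left ?_ (Real.exp_pos _).le
      gcongr
      calc |(-t * Real.cos (b*x) + b * Real.sin (b*x))|
          ≤ |(-t * Real.cos (b*x))| + |b * Real.sin (b*x)| := abs_add_le _ _
        _ ≤ t + |b| := by
            rw [abs_mul, abs_mul, abs_neg, abs_of_pos ht]
            have := Real.abs_cos_le_one (b*x); have := Real.abs_sin_le_one (b*x)
            have := abs_nonneg b
            nlinarith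
    apply squeeze_zero_norm hb1
    simpa using hexp0.mul_const _
  have key := integral_Ioi_of_hasDerivAt_of_tendsto' hF hint hlim
  rw [key, hFdef]
  simp
  field_simp

lemma outer_integral (t : ℝ) (ht : 0 < t) :
    ∫ θ in Ioc (0:ℝ) π, t / (t^2 + Real.sin θ^2) = π / Real.sqrt (1 + t^2) := by
  set s := Real.sqrt (1 + t^2) with hsdef
  have hs2 : s^2 = 1 + t^2 := Real.sq_sqrt (by positivity)
  have hspos : 0 < s := Real.sqrt_pos.mpr (by positivity)
  have hts : t < s := by nlinarith
  set Φ : ℝ → ℝ := fun θ =>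
    (θ + Real.arctan ((s - t) * Real.sin θ * Real.cos θ /
      (t * Real.cos θ^2 + s * Real.sin θ^2))) / s with hΦdef
  have hderiv : ∀ θ : ℝ, HasDerivAt Φ (t / (t^2 + Real.sin θ^2)) θ := by
    intro θ
    set c := Real.cos θ
    set si := Real.sin θ
    have hcs : si^2 + c^2 = 1 := Real.sin_sq_add_cos_sq θ
    have hv : 0 < t * c^2 + s * si^2 := by nlinarith [sq_nonneg c, sq_nonneg si]
    have hu : HasDerivAt (fun θ => (s - t) * Real.sin θ * Real.cos θ)
        ((s - t) * (c^2 - si^2)) θ := by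
      have h1 : HasDerivAt (fun θ : ℝ => (s - t) * Real.sin θ) ((s - t) * c) θ :=
        (Real.hasDerivAt_sin θ).const_mul (s - t)
      have := h1.mul (Real.hasDerivAt_cos θ)
      refine this.congr_deriv ?_
      simp only [c, si]; ring
    have hw : HasDerivAt (fun θ => t * Real.cos θ^2 + s * Real.sin θ^2)
        (2 * (s - t) * si * c) θ := by
      have h1 : HasDerivAt (fun θ : ℝ => Real.cos θ^2) (2 * c * (-si)) θ := by
        refine ((Real.hasDerivAt_cos θ).pow 2).congr_deriv ?_
        norm_num [c, si]
      have h2 : HasDerivAt (fun θ : ℝ => Real.sin θ^2) (2 * si * c) θ := by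
        refine ((Real.hasDerivAt_sin θ).pow 2).congr_deriv ?_
        norm_num [c, si]
      have := (h1.const_mul t).add (h2.const_mul s)
      refine this.congr_deriv ?_
      ring
    have hq : HasDerivAt (fun θ => (s - t) * Real.sin θ * Real.cos θ /
        (t * Real.cos θ^2 + s * Real.sin θ^2))
        (((s - t) * (c^2 - si^2) * (t * c^2 + s * si^2) -
          (s - t) * si * c * (2 * (s - t) * si * c)) / (t * c^2 + s * si^2)^2) θ :=
      hu.div hw hv.ne'
    have harc := hq.arctan
    have hΦ := ((hasDerivAt_id θ).add harc).div_const s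
    refine hΦ.congr_deriv ?_
    symm
    have hden : (0:ℝ) < t^2 + si^2 := by positivity
    have h1 : 1 + ((s - t) * si * c / (t * c^2 + s * si^2))^2 =
        ((t * c^2 + s * si^2)^2 + ((s - t) * si * c)^2) / (t * c^2 + s * si^2)^2 := by
      field_simp
    rw [h1]
    have hD : (t * c^2 + s * si^2) ≠ 0 := hv.ne'
    have hDN : ((t * c^2 + s * si^2)^2 + ((s - t) * si * c)^2) ≠ 0 := by positivity
    have hDN' : (t * c ^ 2 + si ^ 2 * s) * ((t * c ^ 2 + si ^ 2 * s) ^ 2 + si ^ 2 * c ^ 2 * (s - t) ^ 2) ≠ 0 := by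
      rw [show si ^ 2 * s = s * si ^ 2 by ring, show si ^ 2 * c ^ 2 * (s - t) ^ 2 = ((s - t) * si * c) ^ 2 by ring]
      exact mul_ne_zero hD hDN
    field_simp
    rw [one_add_div hDN', mul_div_assoc', eq_div_iff hDN']
    linear_combination (((-1)*t*s^2*si^4 + (-1)*t*s^2*si^4*c^2 + (-1)*t*s^2*si^6 + (1)*t*s^4*si^4 + (-1)*t^2*s*si^2 + (-1)*t^2*s*si^2*c^2 + (-1)*t^2*s*si^2*c^4 + (-1)*t^2*s*si^4*c^2 + (1)*t^2*s^3*si^2 + (1)*t^2*s^3*si^2*c^2 + (-1)*t^3*s^2*si^4 + (-1)*t^4*s*si^2 + (-1)*t^4*s*si^2*c^2) : ℝ) * hcs + (((1)*t*s^2*si^4 + (1)*t^2*s*si^2 + (-1)*t^2*s*si^4) : ℝ) * hs2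
  have hcont : Continuous (fun θ : ℝ => t / (t^2 + Real.sin θ^2)) := by
    apply continuous_const.div
    · fun_prop
    · intro θ; positivity
  have key : ∫ θ in (0:ℝ)..π, t / (t^2 + Real.sin θ^2) = Φ π - Φ 0 := by
    apply intervalIntegral.integral_eq_sub_of_hasDerivAt (fun θ _ => hderiv θ)
    exact hcont.intervalIntegrable _ _
  rw [← intervalIntegral.integral_of_le Real.pi_pos.le, key, hΦdef]
  simp [Real.sin_pi]

lemma J0_rep (x : ℝ) : J0 x = (1/π) * ∫ θ in Ioc (0:ℝ) π, Real.cos (x * Real.sin θ) := by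
  set F : ℕ → ℝ → ℝ := fun k θ => (-1:ℝ)^k * (x * Real.sin θ)^(2*k) / (Nat.factorial (2*k) : ℝ)
    with hFdef
  have hcos : ∀ θ : ℝ, Real.cos (x * Real.sin θ) = ∑' k, F k θ := fun θ =>
    Real.cos_eq_tsum (x * Real.sin θ)
  have hFcont : ∀ k, Continuous (F k) := by
    intro k
    apply Continuous.div_const
    exact (continuous_const.mul (((continuous_const.mul Real.continuous_sin).pow (2*k))))
  have hFint : ∀ k, Integrable (F k) (volume.restrict (Ioc 0 π)) := fun k =>
    (hFcont k).integrableOn_Ioc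
  have hbound : ∀ k, ∫ θ in Ioc (0:ℝ) π, ‖F k θ‖ ≤ π * ((x^2)^k / (Nat.factorial k : ℝ)) := by
    intro k
    have h1 : ∀ θ : ℝ, ‖F k θ‖ ≤ (x^2)^k / (Nat.factorial k : ℝ) := by
      intro θ
      rw [hFdef]
      simp only [Real.norm_eq_abs, abs_div, abs_mul, abs_pow, abs_neg, abs_one, one_pow, one_mul,
        Nat.abs_cast]
      rw [pow_mul]
      refine div_le_div₀ (by positivity) ?_ (by exact_mod_cast Nat.factorial_pos k) ?_
      · refine pow_le_pow_left₀ (by positivity) ?_ k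
        rw [mul_pow, sq_abs, sq_abs]
        nlinarith [Real.sin_sq_le_one θ, sq_nonneg x]
      · exact_mod_cast Nat.factorial_le (by omega : k ≤ 2*k)
    calc ∫ θ in Ioc (0:ℝ) π, ‖F k θ‖ ≤ ∫ θ in Ioc (0:ℝ) π, (x^2)^k / (Nat.factorial k : ℝ) := by
          apply integral_mono_of_nonneg (Filter.Eventually.of_forall fun θ => norm_nonneg _)
            (integrable_const _) (Filter.Eventually.of_forall h1)
      _ = π * ((x^2)^k / (Nat.factorial k : ℝ)) := by
          rw [setIntegral_const, measureReal_def, Real.volume_Ioc, smul_eq_mul, sub_zero,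
            ENNReal.toReal_ofReal Real.pi_pos.le]
  have hsum : Summable (fun k => ∫ θ in Ioc (0:ℝ) π, ‖F k θ‖) := by
    apply Summable.of_nonneg_of_le (fun k => integral_nonneg fun θ => norm_nonneg _) hbound
    exact (Real.summable_pow_div_factorial (x^2)).mul_left π
  have hswap := MeasureTheory.integral_tsum_of_summable_integral_norm hFint hsum
  have hFval : ∀ k, ∫ θ in Ioc (0:ℝ) π, F k θ
      = π * ((-1:ℝ)^k * (x/2)^(2*k) / (Nat.factorial k : ℝ)^2) := by
    intro k
    have h1 : ∀ θ, F k θ = ((-1:ℝ)^k * x^(2*k) / (Nat.factorial (2*k):ℝ)) * (Real.sin θ)^(2*k) := by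
      intro θ; simp only [hFdef]; rw [mul_pow]; ring
    simp_rw [h1]
    rw [MeasureTheory.integral_const_mul]
    rw [← intervalIntegral.integral_of_le Real.pi_pos.le, integral_sin_pow_even, prod_ratio]
    have hf2 : (Nat.factorial (2*k) : ℝ) ≠ 0 := Nat.cast_ne_zero.mpr (Nat.factorial_ne_zero _)
    have hfk : (Nat.factorial k : ℝ) ≠ 0 := Nat.cast_ne_zero.mpr (Nat.factorial_ne_zero _)
    have hx2 : (x/2)^(2*k) = x^(2*k) / 4^k := by
      rw [div_pow, pow_mul, pow_mul]; norm_num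
    rw [hx2]
    field_simp
  have : ∫ θ in Ioc (0:ℝ) π, Real.cos (x * Real.sin θ) = π * J0 x := by
    rw [show (fun θ => Real.cos (x * Real.sin θ)) = fun θ => ∑' k, F k θ from funext hcos] at *
    rw [← hswap]
    rw [show (fun k => ∫ θ in Ioc (0:ℝ) π, F k θ)
        = fun k => π * ((-1:ℝ)^k * (x/2)^(2*k) / (Nat.factorial k : ℝ)^2) from funext hFval]
    rw [tsum_mul_left]
    rfl
  rw [this]
  rw [one_div, inv_mul_cancel_left₀ Real.pi_ne_zero]

lemma J0_sm : StronglyMeasurable J0 := by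
  have h : StronglyMeasurable (fun x : ℝ => ∫ θ in Ioc (0:ℝ) π, Real.cos (x * Real.sin θ)) := by
    have hc : Continuous (fun p : ℝ × ℝ => Real.cos (p.1 * Real.sin p.2)) := by fun_prop
    exact hc.stronglyMeasurable.integral_prod_right'
  have : J0 = fun x => (1/π) * ∫ θ in Ioc (0:ℝ) π, Real.cos (x * Real.sin θ) :=
    funext J0_rep
  rw [this]
  exact (stronglyMeasurable_const.mul h)

lemma J0_abs_le_one (x : ℝ) : |J0 x| ≤ 1 := by
  rw [J0_rep, abs_mul, abs_of_pos (by positivity : (0:ℝ) < 1/π)]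
  have h : ‖∫ θ in Ioc (0:ℝ) π, Real.cos (x * Real.sin θ)‖ ≤ 1 * (volume (Ioc (0:ℝ) π)).toReal := by
    apply norm_setIntegral_le_of_norm_le_const measure_Ioc_lt_top
    · intro θ _
      simp [Real.abs_cos_le_one]
  rw [Real.volume_Ioc, sub_zero, ENNReal.toReal_ofReal Real.pi_pos.le, one_mul] at h
  calc 1/π * |∫ θ in Ioc (0:ℝ) π, Real.cos (x * Real.sin θ)| ≤ 1/π * π := by
        apply mul_le_mul_of_nonneg_left ?_ (by positivity)
        exact h
    _ = 1 := by field_simp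

lemma main_Ioi (t : ℝ) (ht : 0 < t) :
    ∫ x in Ioi (0:ℝ), Real.exp (-t*x) * J0 x = 1 / Real.sqrt (1 + t^2) := by
  have hrw : ∀ x : ℝ, Real.exp (-t*x) * J0 x
      = ∫ θ in Ioc (0:ℝ) π, (1/π) * (Real.exp (-t*x) * Real.cos (x * Real.sin θ)) := by
    intro x
    rw [J0_rep x, MeasureTheory.integral_const_mul]
    rw [show ∫ θ in Ioc (0:ℝ) π, Real.exp (-t*x) * Real.cos (x * Real.sin θ)
        = Real.exp (-t*x) * ∫ θ in Ioc (0:ℝ) π, Real.cos (x * Real.sin θ) from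
      MeasureTheory.integral_const_mul _ _]
    ring
  simp only [hrw]
  have hint_prod : Integrable
      (fun p : ℝ × ℝ => (1/π) * (Real.exp (-t*p.1) * Real.cos (p.1 * Real.sin p.2)))
      ((volume.restrict (Ioi 0)).prod (volume.restrict (Ioc 0 π))) := by
    apply Integrable.const_mul
    have hg : Integrable (fun p : ℝ × ℝ => Real.exp (-t*p.1) * (1:ℝ))
        ((volume.restrict (Ioi 0)).prod (volume.restrict (Ioc 0 π))) :=
      (exp_neg_integrableOn_Ioi 0 ht).mul_prod (integrable_const 1)
    apply Integrable.mono hg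
    · exact (((Real.continuous_exp.comp (continuous_const.mul continuous_fst)).mul
        (Real.continuous_cos.comp (continuous_fst.mul
          (Real.continuous_sin.comp continuous_snd))))).aestronglyMeasurable
    · filter_upwards with p
      simp only [Real.norm_eq_abs, abs_mul, Real.abs_exp, mul_one, abs_one]
      exact mul_le_of_le_one_right (Real.exp_pos _).le (Real.abs_cos_le_one _)
  rw [MeasureTheory.integral_integral_swap hint_prod]
  have hinner : ∀ θ : ℝ, ∫ x in Ioi (0:ℝ), (1/π) * (Real.exp (-t*x) * Real.cos (x * Real.sin θ))
      = (1/π) * (t / (t^2 + Real.sin θ^2)) := by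
    intro θ
    rw [MeasureTheory.integral_const_mul]
    congr 1
    have h1 : ∀ x : ℝ, Real.cos (x * Real.sin θ) = Real.cos (Real.sin θ * x) := by
      intro x; rw [mul_comm]
    simp only [h1]
    exact (laplace_cos t (Real.sin θ) ht).2
  simp only [hinner]
  rw [MeasureTheory.integral_const_mul, outer_integral t ht]
  rw [one_div, one_div]
  rw [← mul_div_assoc, inv_mul_cancel₀ Real.pi_ne_zero, one_div]

/-- Equation (eq:laplace): for `t > 0`, `∫₀^∞ e^{-tx} J₀(x) dx = 1/√(1+t²)`. -/
theorem laplace_transform_J0 (t : ℝ) (ht : 0 < t) :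
    IntegrableOn (fun x : ℝ => Real.exp (-t * x) * J0 x) (Set.Ici 0) ∧
    ∫ x in Set.Ici (0 : ℝ), Real.exp (-t * x) * J0 x =
      1 / Real.sqrt (1 + t ^ 2) := by
  constructor
  · rw [integrableOn_Ici_iff_integrableOn_Ioi]
    apply Integrable.mono (exp_neg_integrableOn_Ioi 0 ht)
    · exact ((Real.continuous_exp.comp
        (continuous_const.mul continuous_id)).stronglyMeasurable.mul J0_sm).aestronglyMeasurable
    · filter_upwards with x
      simp only [Real.norm_eq_abs, abs_mul, Real.abs_exp]
      exact mul_le_of_le_one_right (Real.exp_pos _).le (J0_abs_le_one x)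
  · rw [MeasureTheory.integral_Ici_eq_integral_Ioi]
    exact main_Ioi t ht
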